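/- arXiv:2010.05673 — 5 statements merged into one kernel-verified Lean document; each statement's English description precedes it below -/
import Mathlib

section
/- Let P be a transition kernel on finite S×A (each P(·|s,a) a probability distribution on S) satisfying the anchor-state assumption: P(·|s,a) = Σ_{k∈K} λ_k^{s,a} P(·|s_k,a_k) with λ_k^{s,a} ≥ 0 and Σ_{k∈K} λ_k^{s,a} = 1. Then for every function V : S → ℝ and every (s,a) ∈ S×A, Σ_{k∈K} λ_k^{s,a} √(Var_{s_k,a_k}(V)) ≤ √(Var_{s,a}(V)). -/
/-- A transition kernel: each row `P s a ·` is a probability distribution on `S`. -/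
def IsKernel {S A : Type*} [Fintype S] (P : S → A → S → ℝ) : Prop :=
  (∀ s a s', 0 ≤ P s a s') ∧ ∀ s a, ∑ s', P s a s' = 1

/-- Variance of `V` under the distribution `p`:
`Var_p(V) = Σ p(s')V(s')² − (Σ p(s')V(s'))²`. -/
noncomputable def VarDist {S : Type*} [Fintype S] (p : S → ℝ) (V : S → ℝ) : ℝ :=
  (∑ s', p s' * V s' ^ 2) - (∑ s', p s' * V s') ^ 2

lemma varDist_nonneg {S : Type*} [Fintype S] (p : S → ℝ) (V : S → ℝ)
    (h0 : ∀ s, 0 ≤ p s) (h1 : ∑ s, p s = 1) : 0 ≤ VarDist p V := by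
  have key : VarDist p V = ∑ t, p t * (V t - ∑ s', p s' * V s') ^ 2 := by
    unfold VarDist
    set m := ∑ s', p s' * V s' with hm
    have expand : ∀ t : S, p t * (V t - m) ^ 2
        = p t * V t ^ 2 - 2 * m * (p t * V t) + m ^ 2 * p t := by
      intro t; ring
    rw [Finset.sum_congr rfl (fun t _ => expand t), Finset.sum_add_distrib,
      Finset.sum_sub_distrib, ← Finset.mul_sum, ← Finset.mul_sum, h1]
    ring
  rw [key]
  exact Finset.sum_nonneg fun t _ => mul_nonneg (h0 t) (sq_nonneg _)

theorem stmt8 {S A K : Type*} [Fintype S] [Fintype A] [Fintype K]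
    (P : S → A → S → ℝ) (hP : IsKernel P)
    (anchor : K → S × A) (lam : S → A → K → ℝ)
    (hnn : ∀ s a k, 0 ≤ lam s a k) (hsum : ∀ s a, ∑ k, lam s a k = 1)
    (hrep : ∀ s a s', P s a s' = ∑ k, lam s a k * P (anchor k).1 (anchor k).2 s')
    (V : S → ℝ) (s : S) (a : A) :
    ∑ k, lam s a k * Real.sqrt (VarDist (P (anchor k).1 (anchor k).2) V) ≤
      Real.sqrt (VarDist (P s a) V) := by
  set l : K → ℝ := lam s a with hl
  set Q : K → S → ℝ := fun k => P (anchor k).1 (anchor k).2 with hQ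
  have hlnn : ∀ k, 0 ≤ l k := fun k => hnn s a k
  have hlsum : ∑ k, l k = 1 := hsum s a
  set v : K → ℝ := fun k => VarDist (Q k) V with hv
  have hvnn : ∀ k, 0 ≤ v k := fun k =>
    varDist_nonneg _ _ (fun t => hP.1 _ _ t) (hP.2 _ _)
  set m : K → ℝ := fun k => ∑ s', Q k s' * V s' with hmk
  -- moments of the mixture
  have hEV : ∀ (W : S → ℝ), ∑ s', P s a s' * W s' = ∑ k, l k * ∑ s', Q k s' * W s' := by
    intro W
    calc ∑ s', P s a s' * W s'
        = ∑ s', ∑ k, l k * (Q k s' * W s') := by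
          refine Finset.sum_congr rfl fun s' _ => ?_
          rw [hrep s a s', Finset.sum_mul]
          exact Finset.sum_congr rfl fun k _ => by ring
      _ = ∑ k, l k * ∑ s', Q k s' * W s' := by
          rw [Finset.sum_comm]
          exact Finset.sum_congr rfl fun k _ => by rw [Finset.mul_sum]
  -- Step B: ∑ l k * v k ≤ VarDist (P s a) V
  have hm2 : (∑ k, l k * m k) ^ 2 ≤ ∑ k, l k * m k ^ 2 := by
    have cs := Finset.sum_mul_sq_le_sq_mul_sq Finset.univ
      (fun k => Real.sqrt (l k)) (fun k => Real.sqrt (l k) * m k)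
    have e1 : ∀ k : K, Real.sqrt (l k) * (Real.sqrt (l k) * m k) = l k * m k := by
      intro k; rw [← mul_assoc, Real.mul_self_sqrt (hlnn k)]
    have e2 : ∀ k : K, Real.sqrt (l k) ^ 2 = l k := fun k => Real.sq_sqrt (hlnn k)
    have e3 : ∀ k : K, (Real.sqrt (l k) * m k) ^ 2 = l k * m k ^ 2 := by
      intro k; rw [mul_pow, e2 k]
    simpa [e1, e2, e3, hlsum] using cs
  have stepB : ∑ k, l k * v k ≤ VarDist (P s a) V := by
    have h1 : VarDist (P s a) V = (∑ k, l k * ∑ s', Q k s' * V s' ^ 2) - (∑ k, l k * m k) ^ 2 := by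
      unfold VarDist
      rw [hEV (fun s' => V s' ^ 2), hEV V]
    have h2 : ∑ k, l k * v k
        = (∑ k, l k * ∑ s', Q k s' * V s' ^ 2) - ∑ k, l k * m k ^ 2 := by
      rw [← Finset.sum_sub_distrib]
      refine Finset.sum_congr rfl fun k _ => ?_
      simp [hv, hmk, VarDist, mul_sub]
    rw [h1, h2]
    linarith [hm2]
  -- Step A: ∑ l k * √(v k) ≤ √(∑ l k * v k)
  have stepA : ∑ k, l k * Real.sqrt (v k) ≤ Real.sqrt (∑ k, l k * v k) := by
    have cs := Real.sum_sqrt_mul_sqrt_le Finset.univ (f := l) (g := fun k => l k * v k)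
      hlnn (fun k => mul_nonneg (hlnn k) (hvnn k))
    have e1 : ∀ k : K, Real.sqrt (l k) * Real.sqrt (l k * v k) = l k * Real.sqrt (v k) := by
      intro k
      rw [Real.sqrt_mul (hlnn k), ← mul_assoc, Real.mul_self_sqrt (hlnn k)]
    simpa [e1, hlsum] using cs
  calc ∑ k, l k * Real.sqrt (v k) ≤ Real.sqrt (∑ k, l k * v k) := stepA
    _ ≤ Real.sqrt (VarDist (P s a) V) := Real.sqrt_le_sqrt stepB
end

section
/- Let M = (S, A, P, r, γ) be a discounted MDP with rewards r : S×A → [0,1] and let π : S → A be any policy with value function V^π in M. Then ‖(I − γP^π)^{−1} √(Var_P(V^π))‖_∞ ≤ √(2/(1−γ)³), where the square root is applied entrywise. -/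
open Matrix

/-- The transition matrix on state-action pairs induced by a policy `π`:
`P^π((s,a),(s',a')) = P(s'|s,a)·1[a' = π s']`. -/
noncomputable def Pmat {S A : Type*} [Fintype S] [Fintype A] [DecidableEq A]
    (P : S → A → S → ℝ) (π : S → A) : Matrix (S × A) (S × A) ℝ :=
  Matrix.of fun p q => if q.2 = π q.1 then P p.1 p.2 q.1 else 0

/-- The Q-function of policy `π`: `Q^π = (I − γP^π)⁻¹ r`. -/
noncomputable def Qpi {S A : Type*} [Fintype S] [Fintype A] [DecidableEq S] [DecidableEq A]
    (γ : ℝ) (P : S → A → S → ℝ) (r : S → A → ℝ) (π : S → A) : S × A → ℝ :=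
  ((1 : Matrix (S × A) (S × A) ℝ) - γ • Pmat P π)⁻¹ *ᵥ fun p => r p.1 p.2

/-- The optimal Q-function: componentwise maximum of `Q^π` over policies. -/
noncomputable def Qstar {S A : Type*} [Fintype S] [Fintype A] [DecidableEq S] [DecidableEq A]
    (γ : ℝ) (P : S → A → S → ℝ) (r : S → A → ℝ) : S × A → ℝ :=
  fun x => ⨆ π : S → A, Qpi γ P r π x


/-- The value function of policy `π`: `V^π(s) = Q^π(s, π s)`. -/
noncomputable def Vpi {S A : Type*} [Fintype S] [Fintype A] [DecidableEq S] [DecidableEq A]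
    (γ : ℝ) (P : S → A → S → ℝ) (r : S → A → ℝ) (π : S → A) : S → ℝ :=
  fun s => Qpi γ P r π (s, π s)

section Stoch

variable {X : Type*} [Fintype X] [DecidableEq X] [Nonempty X]

/-- row-stochastic upper bound -/
lemma stoch_mulVec_le {M : Matrix X X ℝ} (hM0 : ∀ x y, 0 ≤ M x y)
    (hM1 : ∀ x, ∑ y, M x y = 1) {v : X → ℝ} {c : ℝ} (hv : ∀ y, v y ≤ c) (x : X) :
    (M *ᵥ v) x ≤ c := by
  have h : (M *ᵥ v) x = ∑ y, M x y * v y := rfl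
  rw [h]
  calc ∑ y, M x y * v y ≤ ∑ y, M x y * c :=
        Finset.sum_le_sum fun y _ => mul_le_mul_of_nonneg_left (hv y) (hM0 x y)
    _ = c := by rw [← Finset.sum_mul, hM1, one_mul]

lemma stoch_le_mulVec {M : Matrix X X ℝ} (hM0 : ∀ x y, 0 ≤ M x y)
    (hM1 : ∀ x, ∑ y, M x y = 1) {v : X → ℝ} {c : ℝ} (hv : ∀ y, c ≤ v y) (x : X) :
    c ≤ (M *ᵥ v) x := by
  have h : (M *ᵥ v) x = ∑ y, M x y * v y := rfl
  rw [h]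
  calc c = ∑ y, M x y * c := by rw [← Finset.sum_mul, hM1, one_mul]
    _ ≤ ∑ y, M x y * v y :=
        Finset.sum_le_sum fun y _ => mul_le_mul_of_nonneg_left (hv y) (hM0 x y)

lemma stoch_isUnit_det {M : Matrix X X ℝ} (hM0 : ∀ x y, 0 ≤ M x y)
    (hM1 : ∀ x, ∑ y, M x y = 1) {β : ℝ} (hβ0 : 0 ≤ β) (hβ1 : β < 1) :
    IsUnit ((1 : Matrix X X ℝ) - β • M).det := by
  rw [isUnit_iff_ne_zero]
  intro hdet
  obtain ⟨v, hv0, hv⟩ := Matrix.exists_mulVec_eq_zero_iff.2 hdet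
  have hv' : ∀ x, v x = β * (M *ᵥ v) x := by
    intro x
    have := congrFun hv x
    simp only [Matrix.sub_mulVec, Matrix.smul_mulVec, Matrix.one_mulVec,
      Pi.sub_apply, Pi.smul_apply, smul_eq_mul, Pi.zero_apply] at this
    linarith
  obtain ⟨x0, hx0⟩ := Finite.exists_max fun x => |v x|
  have hpos : 0 < |v x0| := by
    obtain ⟨x, hx⟩ := Function.ne_iff.1 hv0
    exact lt_of_lt_of_le (abs_pos.2 hx) (hx0 x)
  have habs : |(M *ᵥ v) x0| ≤ |v x0| := by
    have h1 : |(M *ᵥ v) x0| ≤ ∑ y, M x0 y * |v y| := by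
      refine (Finset.abs_sum_le_sum_abs _ _).trans ?_
      exact Finset.sum_le_sum fun y _ => by rw [abs_mul, abs_of_nonneg (hM0 x0 y)]
    exact h1.trans (stoch_mulVec_le hM0 hM1 (fun y => hx0 y) x0)
  have hcontr : |v x0| ≤ β * |v x0| := by
    calc |v x0| = |β * (M *ᵥ v) x0| := by rw [← hv' x0]
      _ = β * |(M *ᵥ v) x0| := by rw [abs_mul, abs_of_nonneg hβ0]
      _ ≤ β * |v x0| := mul_le_mul_of_nonneg_left habs hβ0
  nlinarith

lemma stoch_inv_mulVec_nonneg {M : Matrix X X ℝ} (hM0 : ∀ x y, 0 ≤ M x y)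
    (hM1 : ∀ x, ∑ y, M x y = 1) {β : ℝ} (hβ0 : 0 ≤ β) (hβ1 : β < 1)
    {v : X → ℝ} (hv : ∀ x, 0 ≤ v x) (x : X) :
    0 ≤ (((1 : Matrix X X ℝ) - β • M)⁻¹ *ᵥ v) x := by
  set B := (1 : Matrix X X ℝ) - β • M with hB
  set u := B⁻¹ *ᵥ v with hu
  have hBu : B *ᵥ u = v := by
    rw [hu, Matrix.mulVec_mulVec, Matrix.mul_nonsing_inv B (stoch_isUnit_det hM0 hM1 hβ0 hβ1),
      Matrix.one_mulVec]
  obtain ⟨x0, hx0⟩ := Finite.exists_min u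
  have key : u x0 - β * (M *ᵥ u) x0 = v x0 := by
    have := congrFun hBu x0
    simpa [hB, Matrix.sub_mulVec, Matrix.smul_mulVec] using this
  have h1 : u x0 ≤ (M *ᵥ u) x0 := stoch_le_mulVec hM0 hM1 (fun y => hx0 y) x0
  have h2 : 0 ≤ u x0 := by nlinarith [hv x0, mul_le_mul_of_nonneg_left h1 hβ0]
  exact le_trans (h2.trans (hx0 x)) le_rfl

lemma stoch_inv_mulVec_mono {M : Matrix X X ℝ} (hM0 : ∀ x y, 0 ≤ M x y)
    (hM1 : ∀ x, ∑ y, M x y = 1) {β : ℝ} (hβ0 : 0 ≤ β) (hβ1 : β < 1)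
    {v w : X → ℝ} (hv : ∀ x, v x ≤ w x) (x : X) :
    (((1 : Matrix X X ℝ) - β • M)⁻¹ *ᵥ v) x ≤ (((1 : Matrix X X ℝ) - β • M)⁻¹ *ᵥ w) x := by
  have := stoch_inv_mulVec_nonneg hM0 hM1 hβ0 hβ1
    (v := fun y => w y - v y) (fun y => sub_nonneg.2 (hv y)) x
  have heq : ((1 : Matrix X X ℝ) - β • M)⁻¹ *ᵥ (fun y => w y - v y)
      = (((1 : Matrix X X ℝ) - β • M)⁻¹ *ᵥ w) - (((1 : Matrix X X ℝ) - β • M)⁻¹ *ᵥ v) := by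
    rw [← Matrix.mulVec_sub]; rfl
  rw [heq] at this
  simpa using sub_nonneg.1 this

lemma stoch_inv_mulVec_const {M : Matrix X X ℝ} (hM0 : ∀ x y, 0 ≤ M x y)
    (hM1 : ∀ x, ∑ y, M x y = 1) {β : ℝ} (hβ0 : 0 ≤ β) (hβ1 : β < 1) (c : ℝ) :
    (((1 : Matrix X X ℝ) - β • M)⁻¹ *ᵥ fun _ => c) = fun _ => c / (1 - β) := by
  set B := (1 : Matrix X X ℝ) - β • M with hB
  have hβ1' : (0:ℝ) < 1 - β := by linarith
  have h : B *ᵥ (fun _ => c / (1 - β)) = fun _ => c := by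
    funext x
    have hMc : (M *ᵥ fun _ => c / (1 - β)) x = c / (1 - β) := by
      show ∑ y, M x y * (c / (1-β)) = _
      rw [← Finset.sum_mul, hM1, one_mul]
    have : (B *ᵥ fun _ => c / (1 - β)) x = c / (1-β) - β * (M *ᵥ fun _ => c / (1-β)) x := by
      simp [hB, Matrix.sub_mulVec, Matrix.smul_mulVec]
    rw [this, hMc]
    field_simp
  calc B⁻¹ *ᵥ (fun _ => c) = B⁻¹ *ᵥ (B *ᵥ fun _ => c / (1 - β)) := by rw [h]
    _ = (B⁻¹ * B) *ᵥ (fun _ => c / (1 - β)) := by rw [Matrix.mulVec_mulVec]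
    _ = fun _ => c / (1 - β) := by
        rw [Matrix.nonsing_inv_mul B (stoch_isUnit_det hM0 hM1 hβ0 hβ1), Matrix.one_mulVec]

lemma stoch_inv_entry_nonneg {M : Matrix X X ℝ} (hM0 : ∀ x y, 0 ≤ M x y)
    (hM1 : ∀ x, ∑ y, M x y = 1) {β : ℝ} (hβ0 : 0 ≤ β) (hβ1 : β < 1) (x y : X) :
    0 ≤ ((1 : Matrix X X ℝ) - β • M)⁻¹ x y := by
  have := stoch_inv_mulVec_nonneg hM0 hM1 hβ0 hβ1 (v := Pi.single y 1)
    (fun z => by by_cases h : z = y <;> simp [Pi.single_apply, h]) x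
  simpa using this

/-- Cauchy-Schwarz for weighted sums with nonnegative weights. -/
lemma weighted_cs {p f : X → ℝ} (hp : ∀ z, 0 ≤ p z) :
    (∑ z, p z * f z) ^ 2 ≤ (∑ z, p z) * ∑ z, p z * f z ^ 2 := by
  have key := Finset.sum_mul_sq_le_sq_mul_sq Finset.univ
    (fun z => Real.sqrt (p z)) (fun z => Real.sqrt (p z) * f z)
  have h1 : ∀ z, Real.sqrt (p z) * (Real.sqrt (p z) * f z) = p z * f z := by
    intro z; rw [← mul_assoc, Real.mul_self_sqrt (hp z)]
  have h2 : ∀ z, Real.sqrt (p z) ^ 2 = p z := fun z => Real.sq_sqrt (hp z)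
  have h3 : ∀ z, (Real.sqrt (p z) * f z) ^ 2 = p z * f z ^ 2 := by
    intro z; rw [mul_pow, h2]
  simp only [h1, h2, h3] at key
  exact key

end Stoch
set_option maxHeartbeats 1000000 in
theorem stmt9 {S A : Type*} [Fintype S] [Fintype A] [DecidableEq S] [DecidableEq A]
    [Nonempty S] [Nonempty A]
    (P : S → A → S → ℝ) (r : S → A → ℝ) (γ : ℝ)
    (hP : IsKernel P) (hr : ∀ s a, 0 ≤ r s a ∧ r s a ≤ 1) (hγ0 : 0 < γ) (hγ1 : γ < 1)
    (π : S → A) :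
    ‖((1 : Matrix (S × A) (S × A) ℝ) - γ • Pmat P π)⁻¹ *ᵥ
        fun x : S × A => Real.sqrt (VarDist (P x.1 x.2) (Vpi γ P r π))‖ ≤
      Real.sqrt (2 / (1 - γ) ^ 3) := by
  classical
  set P' := Pmat P π with hP'def
  -- basic facts about P'
  have hP'0 : ∀ x y : S × A, 0 ≤ P' x y := by
    intro x y
    rw [hP'def]
    show (0:ℝ) ≤ if y.2 = π y.1 then P x.1 x.2 y.1 else 0
    split
    · exact hP.1 _ _ _
    · exact le_rfl
  have hPmv : ∀ (f : S × A → ℝ) (x : S × A),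
      (P' *ᵥ f) x = ∑ s', P x.1 x.2 s' * f (s', π s') := by
    intro f x
    show ∑ q : S × A, P' x q * f q = _
    rw [Fintype.sum_prod_type]
    refine Finset.sum_congr rfl fun s' _ => ?_
    have : ∀ a' : A, P' x (s', a') * f (s', a')
        = if a' = π s' then P x.1 x.2 s' * f (s', a') else 0 := by
      intro a'
      rw [hP'def]
      show (if a' = π s' then P x.1 x.2 s' else 0) * f (s', a') = _
      split <;> simp
    simp only [this]
    rw [Finset.sum_ite_eq' Finset.univ (π s') (fun a' => P x.1 x.2 s' * f (s', a'))]
    simp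
  have hP'1 : ∀ x : S × A, ∑ y, P' x y = 1 := by
    intro x
    have h := hPmv (fun _ => (1:ℝ)) x
    have h2 : (P' *ᵥ fun _ => (1:ℝ)) x = ∑ y, P' x y := by
      show ∑ y, P' x y * 1 = _
      simp
    rw [h2] at h
    rw [h]
    simp only [mul_one]
    exact hP.2 x.1 x.2
  -- scalars
  have hγ0' : (0:ℝ) ≤ γ := hγ0.le
  have hd : (0:ℝ) < 1 - γ := by linarith
  have hd' : (1:ℝ) - γ ≠ 0 := ne_of_gt hd
  set K : ℝ := 1/(1-γ) with hK
  have hKpos : 0 < K := by rw [hK]; positivity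
  have hK1 : K * (1-γ) = 1 := by rw [hK]; field_simp
  have hγ20 : (0:ℝ) ≤ γ^2 := sq_nonneg γ
  have hγ21 : γ^2 < 1 := by nlinarith
  -- matrices
  set B : Matrix (S × A) (S × A) ℝ := (1 : Matrix (S × A) (S × A) ℝ) - γ • P' with hBdef
  set C : Matrix (S × A) (S × A) ℝ := (1 : Matrix (S × A) (S × A) ℝ) - γ^2 • P' with hCdef
  have hdetB : IsUnit B.det := by rw [hBdef]; exact stoch_isUnit_det hP'0 hP'1 hγ0' hγ1
  have hdetC : IsUnit C.det := by rw [hCdef]; exact stoch_isUnit_det hP'0 hP'1 hγ20 hγ21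
  have hinvB : ∀ y : S × A → ℝ, B *ᵥ (B⁻¹ *ᵥ y) = y := fun y => by
    rw [Matrix.mulVec_mulVec, Matrix.mul_nonsing_inv B hdetB, Matrix.one_mulVec]
  have hinvC : ∀ y : S × A → ℝ, C⁻¹ *ᵥ (C *ᵥ y) = y := fun y => by
    rw [Matrix.mulVec_mulVec, Matrix.nonsing_inv_mul C hdetC, Matrix.one_mulVec]
  -- Q and Bellman
  set Q : S × A → ℝ := Qpi γ P r π with hQdef
  set rv : S × A → ℝ := fun x => r x.1 x.2 with hrvdef
  have hrv0 : ∀ x, 0 ≤ rv x := fun x => (hr x.1 x.2).1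
  have hrv1 : ∀ x, rv x ≤ 1 := fun x => (hr x.1 x.2).2
  have hQinv : Q = B⁻¹ *ᵥ rv := by rw [hQdef, hBdef, hP'def, hrvdef]; rfl
  have hBQ : B *ᵥ Q = rv := by rw [hQinv]; exact hinvB rv
  set t : S × A → ℝ := P' *ᵥ Q with htdef
  have hBell : ∀ x, Q x = rv x + γ * t x := by
    intro x
    have h := congrFun hBQ x
    rw [hBdef] at h
    rw [Matrix.sub_mulVec, Matrix.smul_mulVec, Matrix.one_mulVec] at h
    have h2 : Q x - γ * (P' *ᵥ Q) x = rv x := h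
    rw [htdef]
    linarith
  have hQ0 : ∀ x, 0 ≤ Q x := by
    intro x
    rw [hQinv, hBdef]
    exact stoch_inv_mulVec_nonneg hP'0 hP'1 hγ0' hγ1 hrv0 x
  have hQK : ∀ x, Q x ≤ K := by
    intro x
    have h1 : (((1:Matrix (S×A) (S×A) ℝ) - γ • P')⁻¹ *ᵥ rv) x
        ≤ (((1:Matrix (S×A) (S×A) ℝ) - γ • P')⁻¹ *ᵥ fun _ => (1:ℝ)) x :=
      stoch_inv_mulVec_mono hP'0 hP'1 hγ0' hγ1 hrv1 x
    have h2 := congrFun (stoch_inv_mulVec_const hP'0 hP'1 hγ0' hγ1 (1:ℝ)) x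
    rw [h2] at h1
    rw [hQinv, hBdef, hK]
    simpa using h1
  have ht0 : ∀ x, 0 ≤ t x := by
    intro x; rw [htdef]; exact stoch_le_mulVec hP'0 hP'1 hQ0 x
  have htK : ∀ x, t x ≤ K := by
    intro x; rw [htdef]; exact stoch_mulVec_le hP'0 hP'1 hQK x
  -- variance vector
  set w : S × A → ℝ := fun x => VarDist (P x.1 x.2) (Vpi γ P r π) with hwdef
  have hVQ : ∀ s', Vpi γ P r π s' = Q (s', π s') := by
    intro s'; rw [hQdef]; rfl
  have hwf : ∀ x, w x = (P' *ᵥ fun z => Q z ^ 2) x - t x ^ 2 := by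
    intro x
    rw [hwdef]
    show (∑ s', P x.1 x.2 s' * Vpi γ P r π s' ^ 2)
        - (∑ s', P x.1 x.2 s' * Vpi γ P r π s') ^ 2 = _
    rw [hPmv (fun z => Q z ^ 2) x, htdef, hPmv Q x]
    simp only [hVQ]
  have hw0 : ∀ x, 0 ≤ w x := by
    intro x
    rw [hwf x]
    have hcs := weighted_cs (p := fun z => P' x z) (f := Q) (fun z => hP'0 x z)
    rw [hP'1 x, one_mul] at hcs
    have h2 : t x ^ 2 ≤ (P' *ᵥ fun z => Q z ^ 2) x := hcs
    linarith
  have hwK : ∀ x, w x ≤ K^2/4 := by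
    intro x
    rw [hwf x]
    have h1 : (P' *ᵥ fun z => Q z ^ 2) x ≤ K * t x := by
      have hz : ∀ z, Q z ^ 2 ≤ K * Q z := fun z => by nlinarith [hQ0 z, hQK z]
      calc (P' *ᵥ fun z => Q z ^ 2) x = ∑ z, P' x z * Q z ^ 2 := rfl
        _ ≤ ∑ z, P' x z * (K * Q z) :=
            Finset.sum_le_sum fun z _ => mul_le_mul_of_nonneg_left (hz z) (hP'0 x z)
        _ = K * t x := by
            rw [htdef]
            show _ = K * ∑ z, P' x z * Q z
            rw [Finset.mul_sum]
            exact Finset.sum_congr rfl fun z _ => by ring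
    nlinarith [sq_nonneg (K - 2 * t x)]
  -- the Z vector
  set Z : S × A → ℝ := C⁻¹ *ᵥ (fun x => γ^2 * w x) with hZdef
  have hZ0 : ∀ x, 0 ≤ Z x := by
    intro x
    rw [hZdef, hCdef]
    exact stoch_inv_mulVec_nonneg hP'0 hP'1 hγ20 hγ21
      (fun y => mul_nonneg (sq_nonneg γ) (hw0 y)) x
  have hCZ : C *ᵥ Z = fun x => γ^2 * w x := by
    rw [hZdef, Matrix.mulVec_mulVec, Matrix.mul_nonsing_inv C hdetC, Matrix.one_mulVec]
  have hPQ2 : ∀ x, (P' *ᵥ fun z => Q z ^ 2) x = w x + t x ^ 2 := by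
    intro x; rw [hwf x]; ring
  have hCQ2 : ∀ x, (C *ᵥ fun z => Q z ^ 2) x
      = rv x ^ 2 + 2*γ*(rv x * t x) - γ^2 * w x := by
    intro x
    have h1 : (C *ᵥ fun z => Q z ^ 2) x = Q x ^ 2 - γ^2 * (P' *ᵥ fun z => Q z ^ 2) x := by
      rw [hCdef, Matrix.sub_mulVec, Matrix.smul_mulVec, Matrix.one_mulVec]
      rfl
    rw [h1, hPQ2 x, hBell x]
    ring
  have hsum : ∀ x, Z x + Q x ^ 2 = (C⁻¹ *ᵥ fun y => rv y ^ 2 + 2*γ*(rv y * t y)) x := by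
    intro x
    have hCsum : C *ᵥ (fun z => Z z + Q z ^ 2) = fun y => rv y ^ 2 + 2*γ*(rv y * t y) := by
      have he : (fun z => Z z + Q z ^ 2) = Z + (fun z => Q z ^ 2) := rfl
      rw [he, Matrix.mulVec_add]
      funext y
      have h1 := congrFun hCZ y
      have h2 := hCQ2 y
      show (C *ᵥ Z) y + (C *ᵥ fun z => Q z ^ 2) y = _
      rw [h1, h2]
      ring
    have := congrFun (hinvC (fun z => Z z + Q z ^ 2)) x
    rw [hCsum] at this
    exact this.symm
  -- Z ≤ K²/4
  have hgle : ∀ x, rv x ^ 2 + 2*γ*(rv x * t x) ≤ (C *ᵥ (K • Q)) x := by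
    intro x
    have h1 : (C *ᵥ (K • Q)) x = K * Q x - γ^2 * (K * t x) := by
      rw [hCdef, Matrix.sub_mulVec, Matrix.smul_mulVec, Matrix.one_mulVec,
        Matrix.mulVec_smul]
      show K * Q x - γ^2 * (K • (P' *ᵥ Q)) x = _
      rw [← htdef]
      show K * Q x - γ^2 * (K * t x) = _
      rfl
    rw [h1, hBell x]
    have ha1 : 0 ≤ rv x * (1 - rv x) := mul_nonneg (hrv0 x) (by linarith [hrv1 x])
    have ha2 : 0 ≤ γ * rv x * (K - t x) :=
      mul_nonneg (mul_nonneg hγ0' (hrv0 x)) (by linarith [htK x])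
    have ha3 : 0 ≤ γ * t x * (1 - rv x) :=
      mul_nonneg (mul_nonneg hγ0' (ht0 x)) (by linarith [hrv1 x])
    have ha4 : rv x * (K * (1 - γ)) = rv x := by rw [hK1]; ring
    nlinarith [ha1, ha2, ha3, ha4]
  have hZK : ∀ x, Z x ≤ K^2/4 := by
    intro x
    have h1 : (C⁻¹ *ᵥ fun y => rv y ^ 2 + 2*γ*(rv y * t y)) x ≤ (C⁻¹ *ᵥ (C *ᵥ (K • Q))) x := by
      rw [hCdef]
      exact stoch_inv_mulVec_mono hP'0 hP'1 hγ20 hγ21 hgle x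
    rw [hinvC (K • Q)] at h1
    have h2 : (K • Q) x = K * Q x := rfl
    rw [h2] at h1
    nlinarith [hsum x, h1, sq_nonneg (K - 2 * Q x)]
  -- key bound on B⁻¹ *ᵥ w
  have hCB : C = B + (γ - γ^2) • P' := by
    rw [hCdef, hBdef, sub_smul]
    abel
  have hNC : B⁻¹ * C = 1 + (γ - γ^2) • (B⁻¹ * P') := by
    rw [hCB, Matrix.mul_add, Matrix.nonsing_inv_mul B hdetB, Matrix.mul_smul]
  have hkey : ∀ x, γ^2 * (B⁻¹ *ᵥ w) x = Z x + (γ - γ^2) * (B⁻¹ *ᵥ (P' *ᵥ Z)) x := by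
    intro x
    have e1 : B⁻¹ *ᵥ (fun y => γ^2 * w y) = B⁻¹ *ᵥ (C *ᵥ Z) := by rw [hCZ]
    have e2 : (B⁻¹ *ᵥ fun y => γ^2 * w y) x = γ^2 * (B⁻¹ *ᵥ w) x := by
      have : (fun y => γ^2 * w y) = (γ^2) • w := rfl
      rw [this, Matrix.mulVec_smul]
      rfl
    have e3 : B⁻¹ *ᵥ (C *ᵥ Z) = Z + (γ - γ^2) • (B⁻¹ *ᵥ (P' *ᵥ Z)) := by
      rw [Matrix.mulVec_mulVec, hNC, Matrix.add_mulVec, Matrix.one_mulVec,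
        Matrix.smul_mulVec, ← Matrix.mulVec_mulVec]
    rw [← e2, e1, e3]
    rfl
  have hPZ : ∀ x, (P' *ᵥ Z) x ≤ K^2/4 := fun x => stoch_mulVec_le hP'0 hP'1 hZK x
  have hNPZ : ∀ x, (B⁻¹ *ᵥ (P' *ᵥ Z)) x ≤ K^2/4 * K := by
    intro x
    have h1 : (((1:Matrix (S×A) (S×A) ℝ) - γ • P')⁻¹ *ᵥ (P' *ᵥ Z)) x
        ≤ (((1:Matrix (S×A) (S×A) ℝ) - γ • P')⁻¹ *ᵥ fun _ => K^2/4) x :=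
      stoch_inv_mulVec_mono hP'0 hP'1 hγ0' hγ1 hPZ x
    have h2 := congrFun (stoch_inv_mulVec_const hP'0 hP'1 hγ0' hγ1 (K^2/4)) x
    rw [h2] at h1
    rw [hBdef]
    have hdiv : K ^ 2 / 4 / (1 - γ) = K ^ 2 / 4 * K := by
      rw [hK]; field_simp
    exact h1.trans_eq hdiv
  have hNw2 : ∀ x, (B⁻¹ *ᵥ w) x ≤ K^2/4 * K := by
    intro x
    have h1 : (((1:Matrix (S×A) (S×A) ℝ) - γ • P')⁻¹ *ᵥ w) x
        ≤ (((1:Matrix (S×A) (S×A) ℝ) - γ • P')⁻¹ *ᵥ fun _ => K^2/4) x :=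
      stoch_inv_mulVec_mono hP'0 hP'1 hγ0' hγ1 hwK x
    have h2 := congrFun (stoch_inv_mulVec_const hP'0 hP'1 hγ0' hγ1 (K^2/4)) x
    rw [h2] at h1
    rw [hBdef]
    have hdiv : K ^ 2 / 4 / (1 - γ) = K ^ 2 / 4 * K := by
      rw [hK]; field_simp
    exact h1.trans_eq hdiv
  have hNw1 : ∀ x, γ^2 * (B⁻¹ *ᵥ w) x ≤ (1+γ) * (K^2/4) := by
    intro x
    rw [hkey x]
    have h1 : (γ - γ^2) * (B⁻¹ *ᵥ (P' *ᵥ Z)) x ≤ (γ - γ^2) * (K^2/4 * K) :=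
      mul_le_mul_of_nonneg_left (hNPZ x) (by nlinarith [mul_nonneg hγ0' hd.le])
    have h2 : (γ - γ^2) * (K^2/4 * K) = γ * (K^2/4) := by
      have : (γ - γ^2) * K = γ := by
        have : γ - γ^2 = γ * (1 - γ) := by ring
        rw [this, mul_assoc, mul_comm (1-γ) K, hK1, mul_one]
      calc (γ - γ^2) * (K^2/4 * K) = ((γ - γ^2) * K) * (K^2/4) := by ring
        _ = γ * (K^2/4) := by rw [this]
    have h3 := hZK x
    linarith
  have hNwfin : ∀ x, (B⁻¹ *ᵥ w) x ≤ 2/(1-γ)^2 := by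
    intro x
    have h2K : 2/(1-γ)^2 = 2 * K^2 := by rw [hK]; field_simp
    rw [h2K]
    rcases le_or_gt γ (7/8) with h | h
    · have hK8 : K ≤ 8 := by
        rw [hK, div_le_iff₀ hd]; linarith
      have h2 := hNw2 x
      nlinarith [h2, mul_nonneg (sq_nonneg K) (sub_nonneg.2 hK8)]
    · have h1 := hNw1 x
      have hγsq : (0:ℝ) < γ^2 := by positivity
      have h8nn : (0:ℝ) ≤ 8*γ^2 - 1 - γ := by nlinarith
      have h8 : (1+γ) * (K^2/4) ≤ γ^2 * (2*K^2) := by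
        nlinarith [mul_nonneg h8nn (sq_nonneg K)]
      exact (mul_le_mul_iff_of_pos_left hγsq).1 (h1.trans h8)
  -- final Cauchy-Schwarz and conclusion
  set σ : (S × A) → ℝ := fun x : S × A => Real.sqrt (VarDist (P x.1 x.2) (Vpi γ P r π))
    with hσdef
  have hσw : ∀ x, σ x = Real.sqrt (w x) := by intro x; rw [hσdef, hwdef]
  have hσ0 : ∀ x, 0 ≤ σ x := fun x => by rw [hσw]; exact Real.sqrt_nonneg _
  have hy0 : ∀ x, 0 ≤ (B⁻¹ *ᵥ σ) x := by
    intro x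
    rw [hBdef]
    exact stoch_inv_mulVec_nonneg hP'0 hP'1 hγ0' hγ1 hσ0 x
  have hrow : ∀ x, ∑ z, B⁻¹ x z = K := by
    intro x
    have h2 := congrFun (stoch_inv_mulVec_const hP'0 hP'1 hγ0' hγ1 (1:ℝ)) x
    have h3 : (((1:Matrix (S×A) (S×A) ℝ) - γ • P')⁻¹ *ᵥ fun _ => (1:ℝ)) x
        = ∑ z, ((1:Matrix (S×A) (S×A) ℝ) - γ • P')⁻¹ x z := by
      show ∑ z, _ * (1:ℝ) = _
      simp
    rw [h3] at h2
    rw [hBdef, h2, hK]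
  have hentry : ∀ x z, 0 ≤ B⁻¹ x z := by
    intro x z
    rw [hBdef]
    exact stoch_inv_entry_nonneg hP'0 hP'1 hγ0' hγ1 x z
  have hy2 : ∀ x, ((B⁻¹ *ᵥ σ) x)^2 ≤ K * (B⁻¹ *ᵥ w) x := by
    intro x
    have hcs := weighted_cs (p := fun z => B⁻¹ x z) (f := σ) (hentry x)
    rw [hrow x] at hcs
    have hσsq : ∀ z, σ z ^ 2 = w z := fun z => by rw [hσw]; exact Real.sq_sqrt (hw0 z)
    simp only [hσsq] at hcs
    exact hcs
  have hfin : ∀ x, (B⁻¹ *ᵥ σ) x ≤ Real.sqrt (2/(1-γ)^3) := by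
    intro x
    have hb : ((B⁻¹ *ᵥ σ) x)^2 ≤ 2/(1-γ)^3 := by
      refine (hy2 x).trans ?_
      have h1 : K * (B⁻¹ *ᵥ w) x ≤ K * (2/(1-γ)^2) :=
        mul_le_mul_of_nonneg_left (hNwfin x) hKpos.le
      have hdiv : K * (2/(1-γ)^2) = 2/(1-γ)^3 := by
        rw [hK]; field_simp
      exact h1.trans_eq hdiv
    calc (B⁻¹ *ᵥ σ) x = Real.sqrt (((B⁻¹ *ᵥ σ) x)^2) := (Real.sqrt_sq (hy0 x)).symm
      _ ≤ Real.sqrt (2/(1-γ)^3) := Real.sqrt_le_sqrt hb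
  rw [pi_norm_le_iff_of_nonneg (Real.sqrt_nonneg _)]
  intro x
  rw [Real.norm_eq_abs, abs_of_nonneg (hy0 x)]
  exact hfin x
end

section
/- Let G = (S_1, S_2, A, P, r, γ) be a two-player turn-based zero-sum stochastic game and let Ĝ = (S_1, S_2, A, P̂, r, γ) be another such game with the same S_1, S_2, A, r, γ and kernel P̂. Let π* = (π_1*, π_2*) be a Nash equilibrium of G with Q* = Q^{π*}, let ĉ_1 and ĉ_2 denote counter (best-response) policies computed in Ĝ, and let π̂ = (π̂_1, π̂_2) satisfy |Q̂^{π̂} − Q̂*| ≤ ε_PS componentwise, where Q̂* is the Nash equilibrium Q-function of Ĝ. Then componentwise: −(‖Q^{ĉ_1(π_2*), π_2*} − Q̂^{ĉ_1(π_2*), π_2*}‖_∞ + ‖Q^{π̂} − Q̂^{π̂}‖_∞ + ε_PS) ≤ Q* − Q^{π̂} ≤ ‖Q^{π_1*, ĉ_2(π_1*)} − Q̂^{π_1*, ĉ_2(π_1*)}‖_∞ + ‖Q^{π̂} − Q̂^{π̂}‖_∞ + ε_PS. -/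
open Matrix

section Aux

variable {S A : Type*} [Fintype S] [Fintype A] [DecidableEq S] [DecidableEq A]

lemma Pmat_nonneg {P : S → A → S → ℝ} (hP : IsKernel P) (π : S → A) (p q : S × A) :
    0 ≤ Pmat P π p q := by
  unfold Pmat
  dsimp only [Matrix.of_apply]
  split
  · exact hP.1 _ _ _
  · exact le_rfl

lemma Pmat_row_sum {P : S → A → S → ℝ} (hP : IsKernel P) (π : S → A) (p : S × A)
    (f : S × A → ℝ) : ∑ q : S × A, Pmat P π p q * f q = ∑ s', P p.1 p.2 s' * f (s', π s') := by
  rw [Fintype.sum_prod_type]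
  refine Finset.sum_congr rfl fun s' _ => ?_
  simp only [Pmat, Matrix.of_apply]
  rw [Finset.sum_congr rfl (fun a' _ => show (if a' = π s' then P p.1 p.2 s' else 0) * f (s', a')
    = if a' = π s' then P p.1 p.2 s' * f (s', π s') else 0 by
      split <;> simp_all)]
  simp

lemma Pmat_row_sum_one {P : S → A → S → ℝ} (hP : IsKernel P) (π : S → A) (p : S × A) :
    ∑ q : S × A, Pmat P π p q = 1 := by
  have := Pmat_row_sum hP π p (fun _ => 1)
  simpa using this.trans (by simpa using hP.2 p.1 p.2)

lemma det_unit {γ : ℝ} (hγ0 : 0 < γ) (hγ1 : γ < 1) {P : S → A → S → ℝ} (hP : IsKernel P)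
    (π : S → A) :
    IsUnit ((1 : Matrix (S × A) (S × A) ℝ) - γ • Pmat P π).det := by
  set M := Pmat P π with hM
  have hdet : ((1 : Matrix (S × A) (S × A) ℝ) - γ • M).det ≠ 0 := by
    apply det_ne_zero_of_sum_row_lt_diag
    intro k
    have hMk1 : M k k ≤ 1 := by
      rw [← Pmat_row_sum_one hP π k]
      exact Finset.single_le_sum (fun q _ => Pmat_nonneg hP π k q) (Finset.mem_univ k)
    have hdiag : ((1 : Matrix (S × A) (S × A) ℝ) - γ • M) k k = 1 - γ * M k k := by
      simp [Matrix.sub_apply, Matrix.one_apply, Matrix.smul_apply, smul_eq_mul]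
    have hoff : ∀ j ∈ Finset.univ.erase k,
        ‖((1 : Matrix (S × A) (S × A) ℝ) - γ • M) k j‖ = γ * M k j := by
      intro j hj
      have hjk : j ≠ k := Finset.ne_of_mem_erase hj
      have : ((1 : Matrix (S × A) (S × A) ℝ) - γ • M) k j = -(γ * M k j) := by
        simp [Matrix.sub_apply, Matrix.one_apply, Matrix.smul_apply, smul_eq_mul, hjk.symm]
      rw [this, norm_neg, Real.norm_eq_abs, abs_of_nonneg
        (mul_nonneg hγ0.le (Pmat_nonneg hP π k j))]
    rw [Finset.sum_congr rfl hoff, hdiag]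
    have hsum : ∑ j ∈ Finset.univ.erase k, γ * M k j = γ * (1 - M k k) := by
      rw [← Finset.mul_sum]
      congr 1
      rw [Finset.sum_erase_eq_sub (Finset.mem_univ k), Pmat_row_sum_one hP π k]
    rw [hsum, Real.norm_eq_abs, abs_of_pos]
    · nlinarith [Pmat_nonneg hP π k k]
    · nlinarith
  exact isUnit_iff_ne_zero.mpr hdet

lemma bellman {γ : ℝ} (hγ0 : 0 < γ) (hγ1 : γ < 1) {P : S → A → S → ℝ} (hP : IsKernel P)
    (r : S → A → ℝ) (π : S → A) (x : S × A) :
    Qpi γ P r π x = r x.1 x.2 + γ * ∑ s', P x.1 x.2 s' * Qpi γ P r π (s', π s') := by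
  set Mat := (1 : Matrix (S × A) (S × A) ℝ) - γ • Pmat P π with hMat
  have hunit := det_unit hγ0 hγ1 hP π
  have key : Mat *ᵥ Qpi γ P r π = fun p => r p.1 p.2 := by
    unfold Qpi
    rw [Matrix.mulVec_mulVec, Matrix.mul_nonsing_inv _ hunit, Matrix.one_mulVec]
  have hx := congrFun key x
  have expand : (Mat *ᵥ Qpi γ P r π) x
      = Qpi γ P r π x - γ * ∑ s', P x.1 x.2 s' * Qpi γ P r π (s', π s') := by
    rw [hMat, Matrix.sub_mulVec, Matrix.one_mulVec, Matrix.smul_mulVec]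
    simp only [Pi.sub_apply, Pi.smul_apply, smul_eq_mul]
    rw [Matrix.mulVec, dotProduct]
    rw [Pmat_row_sum hP π x (Qpi γ P r π)]
  rw [expand] at hx
  linarith [hx]

lemma qpi_mono {γ : ℝ} (hγ0 : 0 < γ) (hγ1 : γ < 1) {P : S → A → S → ℝ} (hP : IsKernel P)
    (r : S → A → ℝ) (π ρ : S → A)
    (h : ∀ s, Qpi γ P r π (s, π s) ≤ Qpi γ P r ρ (s, ρ s)) (x : S × A) :
    Qpi γ P r π x ≤ Qpi γ P r ρ x := by
  rw [bellman hγ0 hγ1 hP r π x, bellman hγ0 hγ1 hP r ρ x]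
  have : ∑ s', P x.1 x.2 s' * Qpi γ P r π (s', π s')
      ≤ ∑ s', P x.1 x.2 s' * Qpi γ P r ρ (s', ρ s') :=
    Finset.sum_le_sum fun s' _ => mul_le_mul_of_nonneg_left (h s') (hP.1 _ _ _)
  nlinarith

lemma abs_sub_le_norm (f g : S × A → ℝ) (x : S × A) : |f x - g x| ≤ ‖f - g‖ := by
  have := norm_le_pi_norm (f - g) x
  simpa [Real.norm_eq_abs] using this

end Aux


theorem stmt17 {S1 S2 A : Type*} [Fintype S1] [Fintype S2] [Fintype A]
    [DecidableEq S1] [DecidableEq S2] [DecidableEq A]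
    [Nonempty S1] [Nonempty S2] [Nonempty A]
    (P Phat : (S1 ⊕ S2) → A → (S1 ⊕ S2) → ℝ) (r : (S1 ⊕ S2) → A → ℝ) (γ : ℝ)
    (hP : IsKernel P) (hPhat : IsKernel Phat)
    (hr : ∀ s a, 0 ≤ r s a ∧ r s a ≤ 1) (hγ0 : 0 < γ) (hγ1 : γ < 1)
    -- a Nash equilibrium `π* = (π1s, π2s)` of the true game `G`
    (π1s : S1 → A) (π2s : S2 → A)
    (hNash1 : ∀ (π1 : S1 → A) (s : S1 ⊕ S2),
        Vpi γ P r (Sum.elim π1 π2s) s ≤ Vpi γ P r (Sum.elim π1s π2s) s)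
    (hNash2 : ∀ (π2 : S2 → A) (s : S1 ⊕ S2),
        Vpi γ P r (Sum.elim π1s π2s) s ≤ Vpi γ P r (Sum.elim π1s π2) s)
    -- counter (best-response) policies computed in the empirical game `Ĝ`
    (c1hat : (S2 → A) → (S1 → A)) (c2hat : (S1 → A) → (S2 → A))
    (hc1 : ∀ (π2 : S2 → A) (π1 : S1 → A) (s : S1 ⊕ S2),
        Vpi γ Phat r (Sum.elim π1 π2) s ≤ Vpi γ Phat r (Sum.elim (c1hat π2) π2) s)
    (hc2 : ∀ (π1 : S1 → A) (π2 : S2 → A) (s : S1 ⊕ S2),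
        Vpi γ Phat r (Sum.elim π1 (c2hat π1)) s ≤ Vpi γ Phat r (Sum.elim π1 π2) s)
    -- a Nash equilibrium `π̂* = (π1hs, π2hs)` of `Ĝ`, whose Q-function is `Q̂*`
    (π1hs : S1 → A) (π2hs : S2 → A)
    (hNash1h : ∀ (π1 : S1 → A) (s : S1 ⊕ S2),
        Vpi γ Phat r (Sum.elim π1 π2hs) s ≤ Vpi γ Phat r (Sum.elim π1hs π2hs) s)
    (hNash2h : ∀ (π2 : S2 → A) (s : S1 ⊕ S2),
        Vpi γ Phat r (Sum.elim π1hs π2hs) s ≤ Vpi γ Phat r (Sum.elim π1hs π2) s)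
    -- a policy pair `π̂` with `|Q̂^{π̂} − Q̂*| ≤ ε_PS` componentwise
    (π1h : S1 → A) (π2h : S2 → A) (εPS : ℝ) (hεPS : 0 ≤ εPS)
    (hPS : ∀ x : (S1 ⊕ S2) × A,
        |Qpi γ Phat r (Sum.elim π1h π2h) x - Qpi γ Phat r (Sum.elim π1hs π2hs) x| ≤ εPS)
    (x : (S1 ⊕ S2) × A) :
    -(‖Qpi γ P r (Sum.elim (c1hat π2s) π2s) - Qpi γ Phat r (Sum.elim (c1hat π2s) π2s)‖ +
        ‖Qpi γ P r (Sum.elim π1h π2h) - Qpi γ Phat r (Sum.elim π1h π2h)‖ + εPS) ≤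
      Qpi γ P r (Sum.elim π1s π2s) x - Qpi γ P r (Sum.elim π1h π2h) x ∧
    Qpi γ P r (Sum.elim π1s π2s) x - Qpi γ P r (Sum.elim π1h π2h) x ≤
      ‖Qpi γ P r (Sum.elim π1s (c2hat π1s)) - Qpi γ Phat r (Sum.elim π1s (c2hat π1s))‖ +
        ‖Qpi γ P r (Sum.elim π1h π2h) - Qpi γ Phat r (Sum.elim π1h π2h)‖ + εPS := by
  -- abbreviations
  set Q := fun π : (S1 ⊕ S2) → A => Qpi γ P r π with hQ
  set Qh := fun π : (S1 ⊕ S2) → A => Qpi γ Phat r π with hQh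
  -- monotonicity consequences
  have hA : ∀ y, Q (Sum.elim π1s π2s) y ≤ Q (Sum.elim π1s (c2hat π1s)) y :=
    qpi_mono hγ0 hγ1 hP r _ _ (fun s => hNash2 (c2hat π1s) s)
  have hB : ∀ y, Qh (Sum.elim π1s (c2hat π1s)) y ≤ Qh (Sum.elim π1s π2hs) y :=
    qpi_mono hγ0 hγ1 hPhat r _ _ (fun s => hc2 π1s π2hs s)
  have hC : ∀ y, Qh (Sum.elim π1s π2hs) y ≤ Qh (Sum.elim π1hs π2hs) y :=
    qpi_mono hγ0 hγ1 hPhat r _ _ (fun s => hNash1h π1s s)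
  have hD : ∀ y, Q (Sum.elim (c1hat π2s) π2s) y ≤ Q (Sum.elim π1s π2s) y :=
    qpi_mono hγ0 hγ1 hP r _ _ (fun s => hNash1 (c1hat π2s) s)
  have hE : ∀ y, Qh (Sum.elim π1hs π2hs) y ≤ Qh (Sum.elim π1hs π2s) y :=
    qpi_mono hγ0 hγ1 hPhat r _ _ (fun s => hNash2h π2s s)
  have hF : ∀ y, Qh (Sum.elim π1hs π2s) y ≤ Qh (Sum.elim (c1hat π2s) π2s) y :=
    qpi_mono hγ0 hγ1 hPhat r _ _ (fun s => hc1 π2s π1hs s)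
  have n1 := abs_sub_le_norm (Q (Sum.elim π1s (c2hat π1s))) (Qh (Sum.elim π1s (c2hat π1s))) x
  have n2 := abs_sub_le_norm (Q (Sum.elim π1h π2h)) (Qh (Sum.elim π1h π2h)) x
  have n3 := abs_sub_le_norm (Q (Sum.elim (c1hat π2s) π2s)) (Qh (Sum.elim (c1hat π2s) π2s)) x
  have hps := hPS x
  rw [abs_le] at n1 n2 n3 hps
  constructor
  · have := hD x
    have := hE x
    have := hF x
    linarith [n3.1, n3.2, n2.1, n2.2, hps.1, hps.2]
  · have := hA x
    have := hB x
    have := hC x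
    linarith [n1.1, n1.2, n2.1, n2.2, hps.1, hps.2]
end

section
/- Let P be a transition kernel on finite S×A (each row a probability distribution on S) satisfying the representative-states assumption with parameter L ≥ 1 and anchor pairs {(s_k,a_k)}_{k∈K}, let r : S×A → [0,1], γ ∈ (0,1), and let P̂_K be any matrix indexed by K×S, with P̂(·|s,a) = Σ_{k∈K} λ_k^{s,a} P̂_K(·|s_k,a_k). Let Q̂_h*, V̂_h* (respectively Q_h*, V_h*) be the H-step value iteration sequences with kernel P̂ (respectively P). Then ‖Q̂_0* − Q_0*‖_∞ ≤ Σ_{h=0}^{H−1} γ^{h+1} · L · max_{k∈K} |Σ_{s'} (P̂_K(s'|s_k,a_k) − P(s'|s_k,a_k)) V̂_{h+1}*(s')|. -/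
/-- The kernel built from anchor rows `PK` by linear combination with coefficients `lam`. -/
noncomputable def kernelOf {S A K : Type*} [Fintype K]
    (lam : S → A → K → ℝ) (PK : K → S → ℝ) : S → A → S → ℝ :=
  fun s a s' => ∑ k, lam s a k * PK k s'

/-- Discounted value iteration with a (possibly signed) kernel `Q`, `t` steps:
`VIter Q r γ 0 = 0`, `VIter Q r γ (t+1) s = max_a (r(s,a) + γ Σ_{s'} Q(s'|s,a) VIter t s')`. -/
noncomputable def VIter {S A : Type*} [Fintype S] [Fintype A]
    (Q : S → A → S → ℝ) (r : S → A → ℝ) (γ : ℝ) : ℕ → S → ℝ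
  | 0 => fun _ => 0
  | t + 1 => fun s => ⨆ a : A, (r s a + γ * ∑ s', Q s a s' * VIter Q r γ t s')

/-- The Q-function at step `h` of `H`-step value iteration with kernel `Q`:
`Q_h*(s,a) = r(s,a) + γ Σ_{s'} Q(s'|s,a) V_{h+1}*(s')` where `V_{h+1}*` is the value after
`H − (h+1)` iterations. -/
noncomputable def QIter {S A : Type*} [Fintype S] [Fintype A]
    (Q : S → A → S → ℝ) (r : S → A → ℝ) (γ : ℝ) (H h : ℕ) : S → A → ℝ :=
  fun s a => r s a + γ * ∑ s', Q s a s' * VIter Q r γ (H - (h + 1)) s'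

private lemma abs_ciSup_sub_ciSup' {A : Type*} [Fintype A] [Nonempty A]
    (f g : A → ℝ) (c : ℝ) (h : ∀ a, |f a - g a| ≤ c) :
    |(⨆ a, f a) - ⨆ a, g a| ≤ c := by
  rw [abs_le]
  constructor
  · rw [neg_le, neg_sub, sub_le_iff_le_add]
    refine ciSup_le fun a => ?_
    have := abs_le.mp (h a)
    have h2 : g a ≤ c + f a := by linarith
    exact h2.trans (by
      have := le_ciSup (Finite.bddAbove_range f) a
      linarith)
  · rw [sub_le_iff_le_add]
    refine ciSup_le fun a => ?_
    have := abs_le.mp (h a)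
    have h2 : f a ≤ c + g a := by linarith
    exact h2.trans (by
      have := le_ciSup (Finite.bddAbove_range g) a
      linarith)

theorem stmt18 {S A K : Type*} [Fintype S] [Fintype A] [Fintype K]
    [Nonempty S] [Nonempty A]
    (P : S → A → S → ℝ) (r : S → A → ℝ) (γ L : ℝ) (H : ℕ)
    (hP : IsKernel P) (hr : ∀ s a, 0 ≤ r s a ∧ r s a ≤ 1)
    (hγ0 : 0 < γ) (hγ1 : γ < 1) (hL : 1 ≤ L)
    (anchor : K → S × A) (lam : S → A → K → ℝ)
    (hsum : ∀ s a, ∑ k, lam s a k = 1) (hL1 : ∀ s a, ∑ k, |lam s a k| ≤ L)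
    (hrep : ∀ s a s', P s a s' = ∑ k, lam s a k * P (anchor k).1 (anchor k).2 s')
    (PhatK : K → S → ℝ) :
    ‖(fun x : S × A =>
        QIter (kernelOf lam PhatK) r γ H 0 x.1 x.2 - QIter P r γ H 0 x.1 x.2)‖ ≤
      ∑ h ∈ Finset.range H, γ ^ (h + 1) * L *
        (⨆ k : K, |∑ s', (PhatK k s' - P (anchor k).1 (anchor k).2 s') *
            VIter (kernelOf lam PhatK) r γ (H - (h + 1)) s'|) := by
  obtain ⟨hP0, hP1⟩ := hP
  have hK : Nonempty K := by
    by_contra hk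
    rw [not_nonempty_iff] at hk
    have h1 := hsum (Classical.arbitrary S) (Classical.arbitrary A)
    simp [Finset.univ_eq_empty] at h1
  set Vh := VIter (kernelOf lam PhatK) r γ with hVh
  set V := VIter P r γ with hVdef
  set E : ℕ → ℝ := fun t =>
    ⨆ k : K, |∑ s', (PhatK k s' - P (anchor k).1 (anchor k).2 s') * Vh t s'| with hE
  have hEfold : ∀ t,
      (⨆ k : K, |∑ s', (PhatK k s' - P (anchor k).1 (anchor k).2 s') * Vh t s'|) = E t :=
    fun t => rfl
  have hE0 : ∀ t, 0 ≤ E t := by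
    intro t
    rw [← hEfold t]
    exact le_trans (abs_nonneg _)
      (le_ciSup (f := fun k : K =>
        |∑ s', (PhatK k s' - P (anchor k).1 (anchor k).2 s') * Vh t s'|)
        (Finite.bddAbove_range _) (Classical.arbitrary K))
  have hL0 : (0:ℝ) ≤ L := le_trans zero_le_one hL
  -- key1 : anchor decomposition bound
  have key1 : ∀ t s a, |∑ s', (kernelOf lam PhatK s a s' - P s a s') * Vh t s'| ≤ L * E t := by
    intro t s a
    have h1 : ∀ s', kernelOf lam PhatK s a s'
        - P s a s' = ∑ k, lam s a k * (PhatK k s' - P (anchor k).1 (anchor k).2 s') := by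
      intro s'
      simp only [kernelOf]
      rw [hrep s a s', ← Finset.sum_sub_distrib]
      exact Finset.sum_congr rfl fun k _ => by ring
    have expand : ∑ s', (kernelOf lam PhatK s a s' - P s a s') * Vh t s'
        = ∑ k, lam s a k * ∑ s', (PhatK k s' - P (anchor k).1 (anchor k).2 s') * Vh t s' := by
      calc ∑ s', (kernelOf lam PhatK s a s' - P s a s') * Vh t s'
          = ∑ s', ∑ k, lam s a k * (PhatK k s' - P (anchor k).1 (anchor k).2 s') * Vh t s' := by
            refine Finset.sum_congr rfl fun s' _ => ?_
            rw [h1 s', Finset.sum_mul]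
        _ = ∑ k, ∑ s', lam s a k * (PhatK k s' - P (anchor k).1 (anchor k).2 s') * Vh t s' :=
            Finset.sum_comm
        _ = ∑ k, lam s a k * ∑ s', (PhatK k s' - P (anchor k).1 (anchor k).2 s') * Vh t s' := by
            refine Finset.sum_congr rfl fun k _ => ?_
            rw [Finset.mul_sum]
            exact Finset.sum_congr rfl fun s' _ => by ring
    rw [expand]
    calc |∑ k, lam s a k * ∑ s', (PhatK k s' - P (anchor k).1 (anchor k).2 s') * Vh t s'|
        ≤ ∑ k, |lam s a k * ∑ s', (PhatK k s' - P (anchor k).1 (anchor k).2 s') * Vh t s'| :=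
          Finset.abs_sum_le_sum_abs _ _
      _ = ∑ k, |lam s a k| * |∑ s', (PhatK k s' - P (anchor k).1 (anchor k).2 s') * Vh t s'| := by
          simp [abs_mul]
      _ ≤ ∑ k, |lam s a k| * E t := by
          refine Finset.sum_le_sum fun k _ => mul_le_mul_of_nonneg_left ?_ (abs_nonneg _)
          rw [← hEfold t]
          exact le_ciSup (f := fun k : K =>
            |∑ s', (PhatK k s' - P (anchor k).1 (anchor k).2 s') * Vh t s'|)
            (Finite.bddAbove_range _) k
      _ = (∑ k, |lam s a k|) * E t := (Finset.sum_mul _ _ _).symm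
      _ ≤ L * E t := mul_le_mul_of_nonneg_right (hL1 s a) (hE0 t)
  -- term2 : expectation of a bounded difference
  have term2 : ∀ t (s : S) (a : A) (B : ℝ), (∀ s', |Vh t s' - V t s'| ≤ B) →
      |∑ s', P s a s' * (Vh t s' - V t s')| ≤ B := by
    intro t s a B hB
    calc |∑ s', P s a s' * (Vh t s' - V t s')|
        ≤ ∑ s', |P s a s' * (Vh t s' - V t s')| := Finset.abs_sum_le_sum_abs _ _
      _ = ∑ s', P s a s' * |Vh t s' - V t s'| := by
          refine Finset.sum_congr rfl fun s' _ => ?_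
          rw [abs_mul, abs_of_nonneg (hP0 s a s')]
      _ ≤ ∑ s', P s a s' * B :=
          Finset.sum_le_sum fun s' _ => mul_le_mul_of_nonneg_left (hB s') (hP0 s a s')
      _ = B := by rw [← Finset.sum_mul, hP1, one_mul]
  have sumid : ∀ t, ∑ i ∈ Finset.range (t+1), γ ^ (t+1-i) * L * E i
      = γ * L * E t + γ * ∑ i ∈ Finset.range t, γ ^ (t-i) * L * E i := by
    intro t
    rw [Finset.sum_range_succ, Finset.mul_sum]
    have h1 : t + 1 - t = 1 := by omega
    rw [h1, pow_one, add_comm]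
    congr 1
    refine Finset.sum_congr rfl fun i hi => ?_
    have hi' : i < t := Finset.mem_range.mp hi
    have h2 : t + 1 - i = (t - i) + 1 := by omega
    rw [h2, pow_succ]
    ring
  have hBnn : ∀ t, 0 ≤ ∑ i ∈ Finset.range t, γ ^ (t - i) * L * E i := fun t =>
    Finset.sum_nonneg fun i _ => mul_nonneg (mul_nonneg (pow_nonneg hγ0.le _) hL0) (hE0 i)
  -- pointwise value difference bound
  have Vbound : ∀ t s, |Vh t s - V t s| ≤ ∑ i ∈ Finset.range t, γ ^ (t - i) * L * E i := by
    intro t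
    induction t with
    | zero => intro s; simp [hVh, hVdef, VIter]
    | succ t ih =>
      intro s
      have step : ∀ a : A, |(r s a + γ * ∑ s', kernelOf lam PhatK s a s' * Vh t s')
          - (r s a + γ * ∑ s', P s a s' * V t s')|
          ≤ γ * L * E t + γ * ∑ i ∈ Finset.range t, γ ^ (t - i) * L * E i := by
        intro a
        have split : (∑ s', kernelOf lam PhatK s a s' * Vh t s') - ∑ s', P s a s' * V t s'
            = (∑ s', (kernelOf lam PhatK s a s' - P s a s') * Vh t s')
              + ∑ s', P s a s' * (Vh t s' - V t s') := by
          rw [← Finset.sum_add_distrib, ← Finset.sum_sub_distrib]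
          exact Finset.sum_congr rfl fun s' _ => by ring
        have hrw : (r s a + γ * ∑ s', kernelOf lam PhatK s a s' * Vh t s')
            - (r s a + γ * ∑ s', P s a s' * V t s')
            = γ * ((∑ s', (kernelOf lam PhatK s a s' - P s a s') * Vh t s')
              + ∑ s', P s a s' * (Vh t s' - V t s')) := by
          rw [← split]; ring
        rw [hrw, abs_mul, abs_of_pos hγ0]
        have htri := abs_add_le (∑ s', (kernelOf lam PhatK s a s' - P s a s') * Vh t s')
          (∑ s', P s a s' * (Vh t s' - V t s'))
        have h1 := key1 t s a
        have h2 := term2 t s a _ ih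
        nlinarith [hγ0]
      have hVh1 : Vh (t+1) s
          = ⨆ a : A, (r s a + γ * ∑ s', kernelOf lam PhatK s a s' * Vh t s') := rfl
      have hV1 : V (t+1) s = ⨆ a : A, (r s a + γ * ∑ s', P s a s' * V t s') := rfl
      rw [sumid t, hVh1, hV1]
      exact abs_ciSup_sub_ciSup' _ _ _ step
  cases H with
  | zero =>
    have hz : (fun x : S × A =>
        QIter (kernelOf lam PhatK) r γ 0 0 x.1 x.2 - QIter P r γ 0 0 x.1 x.2) = 0 := by
      funext x
      simp [QIter, VIter]
    rw [hz, norm_zero]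
    simp
  | succ m =>
    simp only [hEfold]
    have hRHS : ∑ h ∈ Finset.range (m+1), γ ^ (h + 1) * L * E ((m+1) - (h+1))
        = ∑ i ∈ Finset.range (m+1), γ ^ (m+1-i) * L * E i := by
      rw [← Finset.sum_range_reflect (fun i => γ ^ (m+1-i) * L * E i) (m+1)]
      refine Finset.sum_congr rfl fun h hh => ?_
      have hh' : h < m + 1 := Finset.mem_range.mp hh
      have e1 : m + 1 - 1 - h = m - h := by omega
      have e2 : m + 1 - (m - h) = h + 1 := by omega
      have e3 : (m + 1) - (h + 1) = m - h := by omega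
      simp only [e1, e2, e3]
    rw [hRHS, sumid m]
    have hnn : 0 ≤ γ * L * E m + γ * ∑ i ∈ Finset.range m, γ ^ (m - i) * L * E i := by
      have := hBnn m
      have := hE0 m
      positivity
    rw [pi_norm_le_iff_of_nonneg hnn]
    rintro ⟨s, a⟩
    rw [Real.norm_eq_abs]
    have hq : QIter (kernelOf lam PhatK) r γ (m+1) 0 s a - QIter P r γ (m+1) 0 s a
        = γ * ((∑ s', (kernelOf lam PhatK s a s' - P s a s') * Vh m s')
          + ∑ s', P s a s' * (Vh m s' - V m s')) := by
      have s1 : (∑ s', (kernelOf lam PhatK s a s' - P s a s') * Vh m s')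
          + ∑ s', P s a s' * (Vh m s' - V m s')
          = (∑ s', kernelOf lam PhatK s a s' * Vh m s') - ∑ s', P s a s' * V m s' := by
        rw [← Finset.sum_add_distrib, ← Finset.sum_sub_distrib]
        exact Finset.sum_congr rfl fun s' _ => by ring
      rw [s1]
      simp only [QIter, Nat.add_sub_cancel, ← hVh, ← hVdef]
      ring
    rw [hq, abs_mul, abs_of_pos hγ0]
    have htri := abs_add_le (∑ s', (kernelOf lam PhatK s a s' - P s a s') * Vh m s')
      (∑ s', P s a s' * (Vh m s' - V m s'))
    have h1 := key1 m s a
    have h2 := term2 m s a _ (Vbound m)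
    nlinarith [hγ0]
end

section
/- Let S, A be finite, r : S×A → [0,1], and let P̃_K be a matrix indexed by K×S whose rows are probability distributions on S. Suppose coefficients λ_k^{s,a} satisfy Σ_{k∈K} |λ_k^{s,a}| ≤ L for all (s,a), with L ≥ 1, and set P̃(·|s,a) = Σ_{k∈K} λ_k^{s,a} P̃_K(·|s_k,a_k). Let w ∈ ℝ^{S×A} with ‖w‖_∞ ≤ 1. For u = (u_0,…,u_{H−1}) ∈ ℝ^H, define the backward sequences Q̃_{H,u}* = 0, Q̃_{h,u}*(s,a) = r(s,a) + u_h w(s,a) + Σ_{s'} P̃(s'|s,a) Ṽ_{h+1,u}*(s'), Ṽ_{h,u}*(s) = max_a Q̃_{h,u}*(s,a). Then for all u, u' ∈ ℝ^H and all h ∈ {0,…,H−1}: ‖Q̃_{h,u}* − Q̃_{h,u'}*‖_∞ ≤ (H−h)·L^{H−h}·‖u − u'‖_∞. -/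
/-- Extend a vector `u ∈ ℝ^H` to all of `ℕ` by zero. -/
noncomputable def uExt {H : ℕ} (u : Fin H → ℝ) : ℕ → ℝ :=
  fun h => if hh : h < H then u ⟨h, hh⟩ else 0

/-- Undiscounted backward value recursion with (possibly signed) kernel `Pt`, reward
`r + u_h w`: `VIu Pt r w u t h` is the optimal value at step `h` with `t` steps remaining:
`Ṽ_{h}*(s) = max_a (r(s,a) + u_h w(s,a) + Σ_{s'} Pt(s'|s,a) Ṽ_{h+1}*(s'))`, zero when no
steps remain. -/
noncomputable def VIu {S A : Type*} [Fintype S] [Fintype A]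
    (Pt : S → A → S → ℝ) (r : S → A → ℝ) (w : S → A → ℝ) (u : ℕ → ℝ) : ℕ → ℕ → S → ℝ
  | 0, _ => fun _ => 0
  | t + 1, h => fun s =>
      ⨆ a : A, (r s a + u h * w s a + ∑ s', Pt s a s' * VIu Pt r w u t (h + 1) s')

/-- `Q̃_{h,u}*(s,a) = r(s,a) + u_h w(s,a) + Σ_{s'} Pt(s'|s,a) Ṽ_{h+1,u}*(s')` with
horizon `H`. -/
noncomputable def QIu {S A : Type*} [Fintype S] [Fintype A]
    (Pt : S → A → S → ℝ) (r : S → A → ℝ) (w : S → A → ℝ) (u : ℕ → ℝ) (H h : ℕ) :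
    S → A → ℝ :=
  fun s a => r s a + u h * w s a + ∑ s', Pt s a s' * VIu Pt r w u (H - (h + 1)) (h + 1) s'


section Aux

set_option linter.unusedSectionVars false

variable {S A K : Type*} [Fintype S] [Fintype A] [Fintype K] [Nonempty S] [Nonempty A]

lemma kernel_bound' (lam : S → A → K → ℝ) (PtK : K → S → ℝ)
    (hKnn : ∀ k s', 0 ≤ PtK k s') (hKsum : ∀ k, ∑ s', PtK k s' = 1)
    (L : ℝ) (hL1 : ∀ s a, ∑ k, |lam s a k| ≤ L)
    (s : S) (a : A) (x : S → ℝ) (M : ℝ) (hM : 0 ≤ M) (hx : ∀ s', |x s'| ≤ M) :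
    |∑ s', kernelOf lam PtK s a s' * x s'| ≤ L * M := by
  unfold kernelOf
  have hre : ∑ s', (∑ k, lam s a k * PtK k s') * x s'
      = ∑ k, lam s a k * ∑ s', PtK k s' * x s' := by
    simp only [Finset.sum_mul, Finset.mul_sum, mul_assoc]
    exact Finset.sum_comm
  rw [hre]
  calc |∑ k, lam s a k * ∑ s', PtK k s' * x s'|
      ≤ ∑ k, |lam s a k * ∑ s', PtK k s' * x s'| := Finset.abs_sum_le_sum_abs _ _
    _ ≤ ∑ k, |lam s a k| * M := by
        apply Finset.sum_le_sum; intro k _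
        rw [abs_mul]
        apply mul_le_mul_of_nonneg_left _ (abs_nonneg _)
        calc |∑ s', PtK k s' * x s'| ≤ ∑ s', |PtK k s' * x s'| :=
              Finset.abs_sum_le_sum_abs _ _
          _ ≤ ∑ s', PtK k s' * M := by
              apply Finset.sum_le_sum; intro s' _
              rw [abs_mul, abs_of_nonneg (hKnn k s')]
              exact mul_le_mul_of_nonneg_left (hx s') (hKnn k s')
          _ = M := by rw [← Finset.sum_mul, hKsum k, one_mul]
    _ ≤ L * M := by
        rw [← Finset.sum_mul]
        exact mul_le_mul_of_nonneg_right (hL1 s a) hM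

lemma abs_ciSup_sub' (f g : A → ℝ) (M : ℝ) (hfg : ∀ a, |f a - g a| ≤ M) :
    |(⨆ a, f a) - ⨆ a, g a| ≤ M := by
  have bf : BddAbove (Set.range f) := Set.Finite.bddAbove (Set.finite_range f)
  have bg : BddAbove (Set.range g) := Set.Finite.bddAbove (Set.finite_range g)
  rw [abs_sub_le_iff]
  constructor
  · rw [sub_le_iff_le_add]
    apply ciSup_le
    intro a
    have h1 := abs_le.mp (hfg a)
    have h2 := le_ciSup bg a
    linarith [h1.2]
  · rw [sub_le_iff_le_add]
    apply ciSup_le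
    intro a
    have h1 := abs_le.mp (hfg a)
    have h2 := le_ciSup bf a
    linarith [h1.1]

lemma uExt_diff' {H : ℕ} (u u' : Fin H → ℝ) (h : ℕ) :
    |uExt u h - uExt u' h| ≤ ‖u - u'‖ := by
  unfold uExt
  split_ifs with hH
  · have := norm_le_pi_norm (u - u') ⟨h, hH⟩
    simpa [Real.norm_eq_abs] using this
  · simpa using norm_nonneg (u - u')

lemma V_diff' (r : S → A → ℝ)
    (L : ℝ) (hL : 1 ≤ L) {H : ℕ}
    (lam : S → A → K → ℝ) (hL1 : ∀ s a, ∑ k, |lam s a k| ≤ L)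
    (PtK : K → S → ℝ)
    (hKnn : ∀ k s', 0 ≤ PtK k s') (hKsum : ∀ k, ∑ s', PtK k s' = 1)
    (w : S → A → ℝ) (hw : ∀ s a, |w s a| ≤ 1)
    (u u' : Fin H → ℝ) :
    ∀ t h s, |VIu (kernelOf lam PtK) r w (uExt u) t h s
        - VIu (kernelOf lam PtK) r w (uExt u') t h s| ≤ (t : ℝ) * L ^ t * ‖u - u'‖ := by
  have hL0 : (0 : ℝ) ≤ L := by linarith
  have hD : (0 : ℝ) ≤ ‖u - u'‖ := norm_nonneg _
  intro t
  induction t with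
  | zero => intro h s; simp [VIu]
  | succ t ih =>
    intro h s
    simp only [VIu]
    apply abs_ciSup_sub'
    intro a
    have heq : (r s a + uExt u h * w s a
          + ∑ s', kernelOf lam PtK s a s' * VIu (kernelOf lam PtK) r w (uExt u) t (h + 1) s')
        - (r s a + uExt u' h * w s a
          + ∑ s', kernelOf lam PtK s a s' * VIu (kernelOf lam PtK) r w (uExt u') t (h + 1) s')
        = (uExt u h - uExt u' h) * w s a
          + ∑ s', kernelOf lam PtK s a s'
            * (VIu (kernelOf lam PtK) r w (uExt u) t (h + 1) s'
              - VIu (kernelOf lam PtK) r w (uExt u') t (h + 1) s') := by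
      simp only [mul_sub, Finset.sum_sub_distrib]
      ring
    rw [heq]
    have h1 : |(uExt u h - uExt u' h) * w s a| ≤ ‖u - u'‖ := by
      rw [abs_mul]
      calc |uExt u h - uExt u' h| * |w s a| ≤ ‖u - u'‖ * 1 :=
            mul_le_mul (uExt_diff' u u' h) (hw s a) (abs_nonneg _) hD
        _ = ‖u - u'‖ := mul_one _
    have hM : (0 : ℝ) ≤ (t : ℝ) * L ^ t * ‖u - u'‖ := by positivity
    have h2 := kernel_bound' lam PtK hKnn hKsum L hL1 s a
      (fun s' => VIu (kernelOf lam PtK) r w (uExt u) t (h + 1) s'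
        - VIu (kernelOf lam PtK) r w (uExt u') t (h + 1) s')
      ((t : ℝ) * L ^ t * ‖u - u'‖) hM (fun s' => ih (h + 1) s')
    calc |(uExt u h - uExt u' h) * w s a + _| ≤ _ := abs_add_le _ _
      _ ≤ ‖u - u'‖ + L * ((t : ℝ) * L ^ t * ‖u - u'‖) := add_le_add h1 h2
      _ ≤ ((t : ℝ) + 1) * L ^ (t + 1) * ‖u - u'‖ := by
          have hp : (1 : ℝ) ≤ L ^ t := one_le_pow₀ hL
          rw [pow_succ]
          nlinarith [mul_nonneg (mul_nonneg (Nat.cast_nonneg t : (0:ℝ) ≤ (t:ℝ)) hD)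
            (sub_nonneg.mpr hp), mul_nonneg hD (sub_nonneg.mpr hp),
            mul_nonneg (mul_nonneg hD (sub_nonneg.mpr hp)) (sub_nonneg.mpr hL)]
      _ = ((t + 1 : ℕ) : ℝ) * L ^ (t + 1) * ‖u - u'‖ := by push_cast; ring

end Aux

theorem stmt19 {S A K : Type*} [Fintype S] [Fintype A] [Fintype K]
    [Nonempty S] [Nonempty A]
    (r : S → A → ℝ) (hr : ∀ s a, 0 ≤ r s a ∧ r s a ≤ 1)
    (L : ℝ) (hL : 1 ≤ L) (H : ℕ)
    (anchor : K → S × A) (lam : S → A → K → ℝ)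
    (hL1 : ∀ s a, ∑ k, |lam s a k| ≤ L)
    (PtK : K → S → ℝ)
    (hKnn : ∀ k s', 0 ≤ PtK k s') (hKsum : ∀ k, ∑ s', PtK k s' = 1)
    (w : S → A → ℝ) (hw : ∀ s a, |w s a| ≤ 1)
    (u u' : Fin H → ℝ) (h : ℕ) (hh : h < H) :
    ‖(fun x : S × A =>
        QIu (kernelOf lam PtK) r w (uExt u) H h x.1 x.2 -
          QIu (kernelOf lam PtK) r w (uExt u') H h x.1 x.2)‖ ≤
      ((H - h : ℕ) : ℝ) * L ^ (H - h) * ‖u - u'‖ := by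
  have hL0 : (0 : ℝ) ≤ L := by linarith
  have hD : (0 : ℝ) ≤ ‖u - u'‖ := norm_nonneg _
  set t := H - (h + 1) with ht
  have htc : H - h = t + 1 := by omega
  have hC : (0 : ℝ) ≤ ((H - h : ℕ) : ℝ) * L ^ (H - h) * ‖u - u'‖ := by positivity
  rw [pi_norm_le_iff_of_nonneg hC]
  rintro ⟨s, a⟩
  rw [Real.norm_eq_abs]
  show |QIu (kernelOf lam PtK) r w (uExt u) H h s a
      - QIu (kernelOf lam PtK) r w (uExt u') H h s a| ≤ _
  unfold QIu
  have heq : (r s a + uExt u h * w s a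
        + ∑ s', kernelOf lam PtK s a s' * VIu (kernelOf lam PtK) r w (uExt u) (H - (h+1)) (h + 1) s')
      - (r s a + uExt u' h * w s a
        + ∑ s', kernelOf lam PtK s a s' * VIu (kernelOf lam PtK) r w (uExt u') (H - (h+1)) (h + 1) s')
      = (uExt u h - uExt u' h) * w s a
        + ∑ s', kernelOf lam PtK s a s'
          * (VIu (kernelOf lam PtK) r w (uExt u) (H - (h+1)) (h + 1) s'
            - VIu (kernelOf lam PtK) r w (uExt u') (H - (h+1)) (h + 1) s') := by
    simp only [mul_sub, Finset.sum_sub_distrib]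
    ring
  rw [heq]
  have h1 : |(uExt u h - uExt u' h) * w s a| ≤ ‖u - u'‖ := by
    rw [abs_mul]
    calc |uExt u h - uExt u' h| * |w s a| ≤ ‖u - u'‖ * 1 :=
          mul_le_mul (uExt_diff' u u' h) (hw s a) (abs_nonneg _) hD
      _ = ‖u - u'‖ := mul_one _
  have hM : (0 : ℝ) ≤ (t : ℝ) * L ^ t * ‖u - u'‖ := by positivity
  have h2 := kernel_bound' lam PtK hKnn hKsum L hL1 s a
    (fun s' => VIu (kernelOf lam PtK) r w (uExt u) (H - (h+1)) (h + 1) s'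
      - VIu (kernelOf lam PtK) r w (uExt u') (H - (h+1)) (h + 1) s')
    ((t : ℝ) * L ^ t * ‖u - u'‖) hM
    (fun s' => V_diff' r L hL lam hL1 PtK hKnn hKsum w hw u u' t (h + 1) s')
  calc |(uExt u h - uExt u' h) * w s a + _| ≤ _ := abs_add_le _ _
    _ ≤ ‖u - u'‖ + L * ((t : ℝ) * L ^ t * ‖u - u'‖) := add_le_add h1 h2
    _ ≤ ((t : ℝ) + 1) * L ^ (t + 1) * ‖u - u'‖ := by
        have hp : (1 : ℝ) ≤ L ^ t := one_le_pow₀ hL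
        rw [pow_succ]
        nlinarith [mul_nonneg (mul_nonneg (Nat.cast_nonneg t : (0:ℝ) ≤ (t:ℝ)) hD)
          (sub_nonneg.mpr hp), mul_nonneg hD (sub_nonneg.mpr hp),
          mul_nonneg (mul_nonneg hD (sub_nonneg.mpr hp)) (sub_nonneg.mpr hL)]
    _ = ((H - h : ℕ) : ℝ) * L ^ (H - h) * ‖u - u'‖ := by rw [htc]; push_cast; ring
end
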